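/- Let G be a finite simple graph with a Z2-action θ (generator s) such that G is the edge-disjoint union of two s-invariant spanning trees and no edge is fixed by s. If v is a vertex of degree 3 in G, then the neighbourhoods N(v) and N(sv) either (i) are disjoint, (ii) intersect in exactly one vertex, which is the unique fixed vertex, (iii) intersect in exactly two vertices, neither of which is fixed by s, or (iv) intersect in exactly three vertices, exactly one of which is fixed by s. -/

import Mathlib

/-- In a tree invariant under an involution with no fixed edge,
there is at most one fixed vertex. -/
lemma stmt3_fixed_unique {V : Type*} (T1 : SimpleGraph V) (σ : V ≃ V)
    (hT1inv : ∀ a b, T1.Adj a b → T1.Adj (σ a) (σ b))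
    (hT1 : T1.IsTree)
    (hnf : ∀ a b, T1.Adj a b → ¬(σ a = a ∧ σ b = b))
    {a b : V} (ha : σ a = a) (hb : σ b = b) : a = b := by
  classical
  by_contra hne
  let f : T1 →g T1 := ⟨σ, fun h => hT1inv _ _ h⟩
  obtain ⟨w⟩ := hT1.isConnected a b
  set pt : T1.Path a b := w.toPath with hpt
  obtain ⟨c, hadj, q, hq⟩ := SimpleGraph.Walk.exists_eq_cons_of_ne hne pt.val
  have hmapP : ((pt.val.map f).copy ha hb).IsPath := by
    rw [SimpleGraph.Walk.isPath_copy]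
    exact SimpleGraph.Walk.map_isPath_of_injective σ.injective pt.prop
  have huniq : (⟨(pt.val.map f).copy ha hb, hmapP⟩ : T1.Path a b) = pt :=
    hT1.IsAcyclic.path_unique _ _
  have hsupp : List.map σ pt.val.support = pt.val.support := by
    have := congrArg (fun p : T1.Path a b => p.val.support) huniq
    simpa [SimpleGraph.Walk.support_copy, SimpleGraph.Walk.support_map, f] using this
  have hsc : σ c = c := by
    rw [hq, SimpleGraph.Walk.support_cons, q.support_eq_cons,
      List.map_cons, List.map_cons] at hsupp
    simp only [List.cons.injEq] at hsupp
    exact hsupp.2.1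
  exact hnf a c hadj ⟨ha, hsc⟩

theorem stmt_3 {V : Type*} [Fintype V] (G : SimpleGraph V) (σ : V ≃ V)
    (hinv : ∀ a, σ (σ a) = a)
    (haut : ∀ a b, G.Adj a b ↔ G.Adj (σ a) (σ b))
    (T1 T2 : SimpleGraph V)
    (hsup : T1 ⊔ T2 = G)
    (hdisj : Disjoint T1.edgeSet T2.edgeSet)
    (hT1 : T1.IsTree) (hT2 : T2.IsTree)
    (hT1inv : ∀ a b, T1.Adj a b → T1.Adj (σ a) (σ b))
    (hT2inv : ∀ a b, T2.Adj a b → T2.Adj (σ a) (σ b))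
    (hnofix : ∀ a b, G.Adj a b → ¬ ((σ a = a ∧ σ b = b) ∨ (σ a = b ∧ σ b = a)))
    (v : V) (hdeg : (G.neighborSet v).ncard = 3) :
    (G.neighborSet v ∩ G.neighborSet (σ v) = ∅) ∨
    (∃ u, σ u = u ∧ G.neighborSet v ∩ G.neighborSet (σ v) = {u}) ∨
    (∃ u w, u ≠ w ∧ σ u ≠ u ∧ σ w ≠ w ∧
      G.neighborSet v ∩ G.neighborSet (σ v) = {u, w}) ∨
    (∃ u w x, u ≠ w ∧ u ≠ x ∧ w ≠ x ∧ σ u = u ∧ σ w ≠ w ∧ σ x ≠ x ∧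
      G.neighborSet v ∩ G.neighborSet (σ v) = {u, w, x}) := by
  classical
  have hswap : ∀ {a b : V}, σ a = b → σ b = a := by
    intro a b h; rw [← h, hinv]
  -- at most one fixed vertex
  have hufix : ∀ {a b : V}, σ a = a → σ b = b → a = b := by
    intro a b ha hb
    refine stmt3_fixed_unique T1 σ hT1inv hT1 (fun x y hxy hc => ?_) ha hb
    exact hnofix x y (hsup ▸ (SimpleGraph.sup_adj _ _ _ _).2 (Or.inl hxy)) (Or.inl hc)
  set S := G.neighborSet v ∩ G.neighborSet (σ v) with hS
  -- S is σ-invariant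
  have hSinv : ∀ u ∈ S, σ u ∈ S := by
    intro u hu
    simp only [hS, Set.mem_inter_iff, SimpleGraph.mem_neighborSet] at hu ⊢
    obtain ⟨h1, h2⟩ := hu
    constructor
    · have := (haut (σ v) u).1 h2
      rwa [hinv] at this
    · exact (haut v u).1 h1
  have hfin : S.Finite := Set.toFinite _
  have hle : S.ncard ≤ 3 := by
    rw [← hdeg]
    exact Set.ncard_le_ncard Set.inter_subset_left (Set.toFinite _)
  interval_cases h : S.ncard
  · left
    exact (Set.ncard_eq_zero (s := S) hfin).1 h
  · right; left
    obtain ⟨u, hu⟩ := Set.ncard_eq_one.1 h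
    have hmem : u ∈ S := by rw [hu]; rfl
    have : σ u ∈ S := hSinv u hmem
    rw [hu] at this
    exact ⟨u, this, hu⟩
  · right; right; left
    obtain ⟨u, w, huw, huSw⟩ := Set.ncard_eq_two.1 h
    have hu : u ∈ S := huSw ▸ Set.mem_insert _ _
    have hw : w ∈ S := huSw ▸ Set.mem_insert_iff.2 (Or.inr rfl)
    have hσu : σ u ∈ S := hSinv u hu
    have hσw : σ w ∈ S := hSinv w hw
    rw [huSw] at hσu hσw
    simp only [Set.mem_insert_iff, Set.mem_singleton_iff] at hσu hσw
    refine ⟨u, w, huw, ?_, ?_, huSw⟩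
    · intro hfu
      rcases hσw with h2 | h2
      · exact huw (hfu.symm.trans (hswap h2))
      · exact huw (hufix hfu h2)
    · intro hfw
      rcases hσu with h2 | h2
      · exact huw (hufix h2 hfw)
      · exact (Ne.symm huw) (hfw.symm.trans (hswap h2))
  · right; right; right
    obtain ⟨u, w, x, huw, hux, hwx, hSeq⟩ := Set.ncard_eq_three.1 h
    have hu : u ∈ S := hSeq ▸ Set.mem_insert _ _
    have hw : w ∈ S := hSeq ▸ Set.mem_insert_iff.2 (Or.inr (Set.mem_insert _ _))
    have hx : x ∈ S := hSeq ▸ Set.mem_insert_iff.2 (Or.inr (Set.mem_insert_iff.2 (Or.inr rfl)))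
    have hσu : σ u = u ∨ σ u = w ∨ σ u = x := by
      have := hSinv u hu; rw [hSeq] at this; simpa using this
    have hσw : σ w = u ∨ σ w = w ∨ σ w = x := by
      have := hSinv w hw; rw [hSeq] at this; simpa using this
    have hσx : σ x = u ∨ σ x = w ∨ σ x = x := by
      have := hSinv x hx; rw [hSeq] at this; simpa using this
    rcases hσu with h1 | h1 | h1
    · -- σ u = u, so σ swaps w and x
      have hww : σ w ≠ w := fun hc => huw (hufix h1 hc)
      have hσw' : σ w = x := by
        rcases hσw with h2 | h2 | h2
        · exact absurd (h1.symm.trans (hswap h2)) huw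
        · exact absurd h2 hww
        · exact h2
      exact ⟨u, w, x, huw, hux, hwx, h1, hww,
        fun hc => hwx ((hswap hσw').symm.trans hc), hSeq⟩
    · -- σ u = w, σ w = u, σ x = x
      have hwu : σ w = u := hswap h1
      have hσx' : σ x = x := by
        rcases hσx with h2 | h2 | h2
        · exact absurd (h1.symm.trans (hswap h2)) hwx
        · exact absurd (hwu.symm.trans (hswap h2)) hux
        · exact h2
      refine ⟨x, u, w, Ne.symm hux, Ne.symm hwx, huw, hσx',
        fun hc => huw (hc.symm.trans h1), fun hc => (Ne.symm huw) (hc.symm.trans hwu), ?_⟩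
      rw [hSeq]; ext y
      simp only [Set.mem_insert_iff, Set.mem_singleton_iff]; tauto
    · -- σ u = x, σ x = u, σ w = w
      have hxu : σ x = u := hswap h1
      have hσw' : σ w = w := by
        rcases hσw with h2 | h2 | h2
        · exact absurd (h1.symm.trans (hswap h2)) (Ne.symm hwx)
        · exact h2
        · exact absurd (hxu.symm.trans (hswap h2)) huw
      refine ⟨w, u, x, Ne.symm huw, hwx, hux, hσw',
        fun hc => hux (hc.symm.trans h1), fun hc => (Ne.symm hux) (hc.symm.trans hxu), ?_⟩
      rw [hSeq]; ext y
      simp only [Set.mem_insert_iff, Set.mem_singleton_iff]; tauto
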